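/- If each cellular game in a finite family {Gⁱ}_{i=1}^n has at least one Nash equilibrium, then for any integers a, b, the product game ∏ᵢ Gⁱ ⊨ a ∥ b if and only if Gⁱ ⊨ a ∥ b for every i ≤ n. -/

import Mathlib

structure CellularGame where
  S : Type
  u : S → S → S → ℝ

def NashEq (G : CellularGame) (e : ℤ → G.S) : Prop :=
  ∀ (i : ℤ) (s : G.S), G.u (e (i-1)) s (e (i+1)) ≤ G.u (e (i-1)) (e i) (e (i+1))

def Ichg (G : CellularGame) (a b : ℤ) : Prop :=
  ∀ e₁ e₂ : ℤ → G.S, NashEq G e₁ → NashEq G e₂ →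
    ∃ e : ℤ → G.S, NashEq G e ∧ e a = e₁ a ∧ e b = e₂ b
noncomputable def ProdGame {m : ℕ} (G : Fin m → CellularGame) : CellularGame :=
  ⟨∀ i : Fin m, (G i).S, fun x y z => ∑ i : Fin m, (G i).u (x i) (y i) (z i)⟩

lemma nash_prod_iff {m : ℕ} (G : Fin m → CellularGame) (e : ℤ → (ProdGame G).S) :
    NashEq (ProdGame G) e ↔ ∀ i : Fin m, NashEq (G i) (fun k => e k i) := by
  constructor
  · intro h i k s
    have hk := h k (Function.update (e k) i s)
    simp only [ProdGame] at hk
    have hsplit : ∀ (y : (ProdGame G).S),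
        ∑ j : Fin m, (G j).u (e (k-1) j) (y j) (e (k+1) j)
          = (G i).u (e (k-1) i) (y i) (e (k+1) i)
            + ∑ j ∈ Finset.univ.erase i, (G j).u (e (k-1) j) (y j) (e (k+1) j) := by
      intro y
      exact (Finset.add_sum_erase _ _ (Finset.mem_univ i)).symm
    rw [hsplit (e k), hsplit (Function.update (e k) i s)] at hk
    have heq : ∑ j ∈ Finset.univ.erase i,
        (G j).u (e (k-1) j) (Function.update (e k) i s j) (e (k+1) j)
          = ∑ j ∈ Finset.univ.erase i, (G j).u (e (k-1) j) (e k j) (e (k+1) j) := by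
      apply Finset.sum_congr rfl
      intro j hj
      erw [Function.update_of_ne (Finset.ne_of_mem_erase hj)]
    rw [heq] at hk
    have := le_of_add_le_add_right hk
    erw [Function.update_self] at this
    simpa using this
  · intro h k s
    simp only [ProdGame]
    exact Finset.sum_le_sum fun i _ => h i k (s i)

theorem prod_inter {m : ℕ} (G : Fin m → CellularGame)
    (hne : ∀ i : Fin m, ∃ e : ℤ → (G i).S, NashEq (G i) e) (a b : ℤ) :
    Ichg (ProdGame G) a b ↔ ∀ i : Fin m, Ichg (G i) a b := by
  constructor
  · intro h i e₁ e₂ h₁ h₂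
    choose c hc using hne
    let E₁ : ℤ → (ProdGame G).S := fun k => Function.update (fun j => c j k) i (e₁ k)
    let E₂ : ℤ → (ProdGame G).S := fun k => Function.update (fun j => c j k) i (e₂ k)
    have hcomp : ∀ (f : ℤ → (G i).S) (j : Fin m),
        (fun k => Function.update (fun j' => c j' k) i (f k) j)
          = if hji : j = i then fun k => hji ▸ f k else fun k => c j k := by
      intro f j
      by_cases hji : j = i
      · subst hji; simp [Function.update]
      · simp [hji, Function.update_of_ne hji]
    have hE₁ : NashEq (ProdGame G) E₁ := by
      rw [nash_prod_iff]
      intro j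
      show NashEq (G j) (fun k => Function.update (fun j' => c j' k) i (e₁ k) j)
      rw [hcomp e₁ j]
      by_cases hji : j = i
      · subst hji; simpa using h₁
      · simpa [hji] using hc j
    have hE₂ : NashEq (ProdGame G) E₂ := by
      rw [nash_prod_iff]
      intro j
      show NashEq (G j) (fun k => Function.update (fun j' => c j' k) i (e₂ k) j)
      rw [hcomp e₂ j]
      by_cases hji : j = i
      · subst hji; simpa using h₂
      · simpa [hji] using hc j
    obtain ⟨E, hE, hEa, hEb⟩ := h E₁ E₂ hE₁ hE₂
    refine ⟨fun k => E k i, (nash_prod_iff G E).mp hE i, ?_, ?_⟩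
    · show E a i = e₁ a
      rw [hEa]; simp [E₁]
    · show E b i = e₂ b
      rw [hEb]; simp [E₂]
  · intro h E₁ E₂ h₁ h₂
    have h₁' := (nash_prod_iff G E₁).mp h₁
    have h₂' := (nash_prod_iff G E₂).mp h₂
    choose f hf hfa hfb using fun i => h i _ _ (h₁' i) (h₂' i)
    refine ⟨fun k i => f i k, ?_, ?_, ?_⟩
    · exact (nash_prod_iff G _).mpr hf
    · funext i; exact hfa i
    · funext i; exact hfb i
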